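/- Let ρ be a congruence on M_n (n ≥ 1). If 1 ρ b or 1 ρ c (images of the generators b, c in M_n), then ρ = M_n × M_n. -/

import Mathlib

inductive Letter | a | b | c | d | z
deriving DecidableEq

abbrev W := FreeMonoid Letter
def A : W := FreeMonoid.of .a
def B : W := FreeMonoid.of .b
def C : W := FreeMonoid.of .c
def D : W := FreeMonoid.of .d
def Z : W := FreeMonoid.of .z

/-- The defining relations of `M n`, with the zero realized by the letter `z`. -/
def relM (n : ℕ) : W → W → Prop := fun x y =>
  (x = A ^ n * B ∧ y = Z) ∨
  (x = A * C ∧ y = 1) ∨ (x = D * B ∧ y = 1) ∨ (x = D * C ∧ y = 1) ∨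
  (∃ k, 1 ≤ k ∧ k ≤ n - 1 ∧ x = D * A ^ k * B ∧ y = 1) ∨
  (∃ l : Letter, x = FreeMonoid.of l * Z ∧ y = Z) ∨
  (∃ l : Letter, x = Z * FreeMonoid.of l ∧ y = Z)

def Mcon (n : ℕ) : Con W := conGen (relM n)

/-- The monoid `M n = Mon⟨a,b,c,d : aⁿb=0, ac=1, db=1, dc=1, daᵏb=1 (1 ≤ k ≤ n-1)⟩`. -/
abbrev M (n : ℕ) := (Mcon n).Quotient

namespace Stmt8Aux

lemma rel_eq {n : ℕ} {x y : W} (h : relM n x y) : (x : M n) = (y : M n) :=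
  (Con.eq _).mpr (ConGen.Rel.of _ _ h)

lemma ac_eq (n : ℕ) : (A : M n) * (C : M n) = 1 := by
  have := rel_eq (n := n) (x := A * C) (y := 1) (by simp [relM])
  simpa using this

lemma dc_eq (n : ℕ) : (D : M n) * (C : M n) = 1 := by
  have := rel_eq (n := n) (x := D * C) (y := 1) (by simp [relM])
  simpa using this

lemma db_eq (n : ℕ) : (D : M n) * (B : M n) = 1 := by
  have := rel_eq (n := n) (x := D * B) (y := 1) (by simp [relM])
  simpa using this

lemma anb_eq (n : ℕ) : (A : M n) ^ n * (B : M n) = (Z : M n) := by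
  have := rel_eq (n := n) (x := A ^ n * B) (y := Z) (by simp [relM])
  simpa [show ((A ^ n : W) : M n) = (A : M n) ^ n from rfl] using this

lemma zc_eq (n : ℕ) : (Z : M n) * (C : M n) = (Z : M n) := by
  have := rel_eq (n := n) (x := Z * C) (y := Z)
    (by exact Or.inr (Or.inr (Or.inr (Or.inr (Or.inr (Or.inr ⟨Letter.c, rfl, rfl⟩)))))) 
  simpa using this

lemma z_mul_cpow (n k : ℕ) : (Z : M n) * (C : M n) ^ k = (Z : M n) := by
  induction k with
  | zero => simp
  | succ m ih =>
    rw [pow_succ', ← mul_assoc, zc_eq, ih]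

lemma apow_cpow (n k : ℕ) : (A : M n) ^ k * (C : M n) ^ k = 1 := by
  induction k with
  | zero => simp
  | succ m ih =>
    rw [pow_succ, pow_succ', mul_assoc, ← mul_assoc (A : M n), ac_eq, one_mul, ih]

lemma mul_z (n : ℕ) (x : M n) : x * (Z : M n) = (Z : M n) := by
  induction x using Con.induction_on with
  | H w =>
    induction w using FreeMonoid.recOn with
    | one => simp
    | of_mul l w ihw =>
      have h1 : ((FreeMonoid.of l * w : W) : M n) = (FreeMonoid.of l : W) * (w : M n) :=
        Con.coe_mul _ _
      rw [h1, mul_assoc, ihw]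
      have := rel_eq (n := n) (x := FreeMonoid.of l * Z) (y := Z)
        (Or.inr (Or.inr (Or.inr (Or.inr (Or.inr (Or.inl ⟨l, rfl, rfl⟩))))))
      simpa using this

end Stmt8Aux

/-- If a congruence on `M n` identifies `1` with `b` or with `c`,
it is the full congruence. -/
theorem stmt8 (n : ℕ) (hn : 1 ≤ n) (ρ : Con (M n))
    (h : ρ 1 (B : M n) ∨ ρ 1 (C : M n)) : ρ = ⊤ := by
  open Stmt8Aux in
  have hb : ρ 1 (B : M n) := by
    rcases h with hb | hc
    · exact hb
    · -- d = d*1 ρ d*c = 1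
      have hd : ρ (D : M n) 1 := by
        have := ρ.mul (ρ.refl (D : M n)) hc
        rw [mul_one, dc_eq] at this
        exact this
      have := ρ.mul hd (ρ.refl (B : M n))
      rw [db_eq, one_mul] at this
      exact this
  -- a^n ρ a^n * b = z
  have hz : ρ ((A : M n) ^ n) (Z : M n) := by
    have := ρ.mul (ρ.refl ((A : M n) ^ n)) hb
    rw [mul_one, anb_eq] at this
    exact this
  -- 1 = a^n c^n ρ z c^n = z
  have h1z : ρ 1 (Z : M n) := by
    have := ρ.mul hz (ρ.refl ((C : M n) ^ n))
    rw [apow_cpow, z_mul_cpow] at this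
    exact this
  have hall : ∀ x : M n, ρ x (Z : M n) := by
    intro x
    have := ρ.mul (ρ.refl x) h1z
    rw [mul_one, mul_z] at this
    exact this
  refine le_antisymm le_top ?_
  intro x y _
  exact ρ.trans (hall x) (ρ.symm (hall y))
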